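/- arXiv:2402.08573 — 2 statements merged into one kernel-verified Lean document; each statement's English description precedes it below -/
import Mathlib

section
/- Define J(α, β; θ) as in the AROVR objective: J(α,β;θ) = α·ℓ(s_{αβ}) + (1/β)U(s_{αβ}) + (1−α)·ℓ(s_{−γ}) − (1/β)U(s_{−γ}), where s_{αβ} minimizes α·ℓ(s)+(1/β)U(s) and s_{−γ} minimizes −(1−α)ℓ(s)+(1/β)U(s). Let 0 < β' < β and α, α' ∈ [0,1] satisfy (1−α)·β = (1−α')·β'. Then J(α, β; θ) ≤ J(α', β'; θ). -/
/-- Proposition 2: if `0 < β' < β` and `(1−α)β = (1−α')β'` (constant adversarial step length),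
then `J(α,β) ≤ J(α',β')` for the AROVR objective. Note that the negatively nudged minimizer
`s₋γ` is shared, since `−(1−α)ℓ + (1/β)U` and `−(1−α')ℓ + (1/β')U` have the same minimizers. -/
theorem stmt_3 {n : ℕ} (ℓ U : (Fin n → ℝ) → ℝ) (α α' β β' : ℝ)
    (hβ' : 0 < β') (hββ' : β' < β) (hα0 : 0 ≤ α) (hα1 : α ≤ 1) (hα'0 : 0 ≤ α') (hα'1 : α' ≤ 1)
    (hγ : (1-α) * β = (1-α') * β')
    (sab sab' sg sg' : Fin n → ℝ)
    (hsab : ∀ s, α * ℓ sab + (1/β) * U sab ≤ α * ℓ s + (1/β) * U s)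
    (hsab' : ∀ s, α' * ℓ sab' + (1/β') * U sab' ≤ α' * ℓ s + (1/β') * U s)
    (hsg : ∀ s, -(1-α) * ℓ sg + (1/β) * U sg ≤ -(1-α) * ℓ s + (1/β) * U s)
    (hsg' : ∀ s, -(1-α') * ℓ sg' + (1/β') * U sg' ≤ -(1-α') * ℓ s + (1/β') * U s) :
    α * ℓ sab + (1/β) * U sab + (1-α) * ℓ sg - (1/β) * U sg ≤
      α' * ℓ sab' + (1/β') * U sab' + (1-α') * ℓ sg' - (1/β') * U sg' := by
  have hβ : (0:ℝ) < β := hβ'.trans hββ'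
  have hβne : β ≠ 0 := ne_of_gt hβ
  have hβ'ne : β' ≠ 0 := ne_of_gt hβ'
  have h1 := hsab sab'
  have h2 := hsg sg'
  have h3 := hsg' sab'
  -- multiply h3 by β' > 0 and use hγ: sg' minimizes -γℓ + U with γ = (1-α)β
  have h3' : -((1-α)*β) * ℓ sg' + U sg' ≤ -((1-α)*β) * ℓ sab' + U sab' := by
    have hm := mul_le_mul_of_nonneg_left h3 hβ'.le
    have e1 : β' * (-(1-α') * ℓ sg' + (1/β') * U sg') = -((1-α')*β') * ℓ sg' + U sg' := by
      field_simp
    have e2 : β' * (-(1-α') * ℓ sab' + (1/β') * U sab') = -((1-α')*β') * ℓ sab' + U sab' := by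
      field_simp
    rw [e1, e2, ← hγ] at hm
    exact hm
  -- express α' in terms of α, β, β'
  have hαα' : α' = 1 - (1-α)*β/β' := by
    field_simp
    linarith [hγ]
  -- key inequality comparing values at the common points sab', sg'
  have hkey : α * ℓ sab' + (1/β) * U sab' + (1-α) * ℓ sg' - (1/β) * U sg' ≤
      α' * ℓ sab' + (1/β') * U sab' + (1-α') * ℓ sg' - (1/β') * U sg' := by
    rw [hαα', ← sub_nonneg]
    have heq : (1 - (1-α)*β/β') * ℓ sab' + (1/β') * U sab'
        + (1-(1 - (1-α)*β/β')) * ℓ sg' - (1/β') * U sg'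
        - (α * ℓ sab' + (1/β) * U sab' + (1-α) * ℓ sg' - (1/β) * U sg')
        = ((β-β')/(β*β')) *
          ((-((1-α)*β) * ℓ sab' + U sab') - (-((1-α)*β) * ℓ sg' + U sg')) := by
      field_simp
      ring
    rw [heq]
    apply mul_nonneg
    · apply div_nonneg (by linarith) (by positivity)
    · linarith [h3']
  -- sg' also bounds sg: both minimize -γℓ + U
  have h4 := hsg' sg
  have hm := mul_le_mul_of_nonneg_left h4 hβ'.le
  have e1 : β' * (-(1-α') * ℓ sg' + (1/β') * U sg') = -((1-α')*β') * ℓ sg' + U sg' := by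
    field_simp
  have e2 : β' * (-(1-α') * ℓ sg + (1/β') * U sg) = -((1-α')*β') * ℓ sg + U sg := by
    field_simp
  rw [e1, e2, ← hγ] at hm
  have hm2 := mul_le_mul_of_nonneg_left hm (by positivity : (0:ℝ) ≤ 1/β)
  have e3 : (1/β) * (-((1-α)*β) * ℓ sg' + U sg') = -(1-α) * ℓ sg' + (1/β) * U sg' := by
    field_simp
  have e4 : (1/β) * (-((1-α)*β) * ℓ sg + U sg) = -(1-α) * ℓ sg + (1/β) * U sg := by
    field_simp
  rw [e3, e4] at hm2
  linarith [h1, h2, hm2, hkey]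
end

section
/- Let f : ℝⁿ → ℝⁿ be affine, f(a) = s₀ + D a with D invertible, α ∈ [0,1], and suppose s⁺ − s⁻ = Dᵀ Wᵀ e for some vectors W (matrix) and e. If f⁻¹(α s⁺ + (1−α)s⁻) = a₀ for some a₀ ∈ ℝⁿ, then s⁻ = f(a₀ − α Wᵀ e) and s⁺ = f(a₀ + (1−α) Wᵀ e). -/
open Matrix

/-- Core algebraic step of the DP⊤ hidden-layer updates: for affine `f(a) = s₀ + Da` with
`D` invertible (and symmetric, as assumed for activation derivatives), if
`s⁺ − s⁻ = DᵀWᵀe` and `f⁻¹(αs⁺ + (1−α)s⁻) = a₀` (i.e. `αs⁺ + (1−α)s⁻ = f(a₀)`), then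
`s⁻ = f(a₀ − αWᵀe)` and `s⁺ = f(a₀ + (1−α)Wᵀe)`. -/
theorem stmt_15 {n : ℕ} (D W : Matrix (Fin n) (Fin n) ℝ) [Invertible D] (hD : D.IsSymm)
    (s0 : Fin n → ℝ)
    (f : (Fin n → ℝ) → (Fin n → ℝ)) (hf : ∀ a, f a = s0 + D.mulVec a)
    (α : ℝ) (hα0 : 0 ≤ α) (hα1 : α ≤ 1)
    (sp sm e a0 : Fin n → ℝ)
    (hdiff : sp - sm = Dᵀ.mulVec (Wᵀ.mulVec e))
    (hmean : α • sp + (1-α) • sm = f a0) :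
    sm = f (a0 - α • Wᵀ.mulVec e) ∧ sp = f (a0 + (1-α) • Wᵀ.mulVec e) := by
  rw [hD] at hdiff
  have h1 := hf a0
  have h2 := hf (a0 - α • Wᵀ.mulVec e)
  have h3 := hf (a0 + (1-α) • Wᵀ.mulVec e)
  rw [mulVec_sub, mulVec_smul] at h2
  rw [mulVec_add, mulVec_smul] at h3
  rw [← hdiff] at h2 h3
  rw [h1] at hmean
  constructor
  · rw [h2]
    funext i
    have hm := congrFun hmean i
    simp [Pi.add_apply, Pi.sub_apply, Pi.smul_apply] at hm ⊢
    linarith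
  · rw [h3]
    funext i
    have hm := congrFun hmean i
    simp [Pi.add_apply, Pi.sub_apply, Pi.smul_apply] at hm ⊢
    linarith
end
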